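/- Let p be an odd prime with p ∤ a, p ∤ b, p | c, and p ∤ (n−1). If a·(−a·(n−2))^{n−2} + b·(n−1)^{n−1} ≢ 0 (mod p), then the polynomial x^n + ā·x^{n−1} + b̄·x is separable over 𝔽_p (has no repeated roots in an algebraic closure of 𝔽_p). -/
import Mathlib


open Polynomial

theorem stmt_5 (n : ℕ) (hn : 4 < n) (a b c : ℤ) (habc : a * b * c ≠ 0)
    (p : ℕ) [hp : Fact p.Prime] (hodd : p ≠ 2)
    (hpa : ¬ (p : ℤ) ∣ a) (hpb : ¬ (p : ℤ) ∣ b) (hpc : (p : ℤ) ∣ c)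
    (hpn1 : ¬ (p : ℤ) ∣ ((n : ℤ) - 1))
    (hsep : ¬ (p : ℤ) ∣ (a * (-a * ((n : ℤ) - 2)) ^ (n - 2) + b * ((n : ℤ) - 1) ^ (n - 1))) :
    (X ^ n + C ((a : ZMod p)) * X ^ (n - 1) + C ((b : ZMod p)) * X : (ZMod p)[X]).Separable := by
  obtain ⟨m, rfl⟩ : ∃ m, n = m + 2 := ⟨n - 2, by omega⟩
  have hm : 3 ≤ m := by omega
  have hm1 : m + 2 - 1 = m + 1 := by omega
  have hm2 : m + 2 - 2 = m := by omega
  rw [hm1]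
  -- nonvanishing facts in ZMod p
  have ha : ((a : ZMod p)) ≠ 0 := by
    rwa [Ne, ZMod.intCast_zmod_eq_zero_iff_dvd]
  have hb : ((b : ZMod p)) ≠ 0 := by
    rwa [Ne, ZMod.intCast_zmod_eq_zero_iff_dvd]
  have hn1 : ((m : ZMod p) + 1) ≠ 0 := by
    intro h0
    apply hpn1
    rw [← ZMod.intCast_zmod_eq_zero_iff_dvd]
    push_cast
    linear_combination h0
  have hS : ((a : ZMod p)) * (-(a : ZMod p) * ((m : ZMod p))) ^ m
      + ((b : ZMod p)) * ((m : ZMod p) + 1) ^ (m + 1) ≠ 0 := by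
    intro h0
    apply hsep
    rw [← ZMod.intCast_zmod_eq_zero_iff_dvd]
    rw [hm1, hm2]
    push_cast
    linear_combination h0
  rw [separable_def]
  refine (Polynomial.isCoprime_iff_aeval_ne_zero_of_isAlgClosed (k := ZMod p)
    (AlgebraicClosure (ZMod p)) _ _).mpr fun α => ?_
  by_contra hc
  push_neg at hc
  obtain ⟨h1, h2⟩ := hc
  simp only [derivative_add, derivative_mul, derivative_X_pow, derivative_X, derivative_C,
    hm1, hm2] at h2
  simp only [map_add, map_mul, map_pow, aeval_X, aeval_C, aeval_natCast, map_natCast,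
    zero_mul, mul_one, add_zero, zero_add, mul_zero, map_ofNat] at h1 h2
  push_cast at h1 h2
  set A := algebraMap (ZMod p) (AlgebraicClosure (ZMod p)) ((a : ZMod p)) with hA
  set B := algebraMap (ZMod p) (AlgebraicClosure (ZMod p)) ((b : ZMod p)) with hB
  have hinj : Function.Injective (algebraMap (ZMod p) (AlgebraicClosure (ZMod p))) :=
    (algebraMap (ZMod p) (AlgebraicClosure (ZMod p))).injective
  have hA0 : A ≠ 0 := fun h => ha (hinj (by rw [← hA, h, map_zero]))
  have hB0 : B ≠ 0 := fun h => hb (hinj (by rw [← hB, h, map_zero]))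
  -- h1 : α^(m+2) + A * α^(m+1) + B * α = 0
  -- h2 : (m+2) * α^(m+1) + A * ((m+1) * α^m) + B = 0
  rcases eq_or_ne α 0 with rfl | hα
  · rw [zero_pow (by omega : m + 1 ≠ 0), zero_pow (by omega : m ≠ 0)] at h2
    simp at h2
    exact hB0 h2
  · have E1 : α ^ (m + 1) + A * α ^ m + B = 0 := by
      apply mul_left_cancel₀ hα
      rw [mul_zero]
      linear_combination h1
    have hk1 : α ^ (m + 1) = (m : AlgebraicClosure (ZMod p)) * B := by
      linear_combination h2 - ((m : AlgebraicClosure (ZMod p)) + 1) * E1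
    have hk2 : A * α ^ m = -(m : AlgebraicClosure (ZMod p)) * B - B := by
      linear_combination ((m : AlgebraicClosure (ZMod p)) + 2) * E1 - h2
    have hk3 : (((m : AlgebraicClosure (ZMod p)) + 1) * α) * B
        = (A * -(m : AlgebraicClosure (ZMod p))) * B := by
      linear_combination α * hk2 - A * hk1
    have hk3' := mul_right_cancel₀ hB0 hk3
    have hfinal : A * (-A * (m : AlgebraicClosure (ZMod p))) ^ m
        + B * ((m : AlgebraicClosure (ZMod p)) + 1) ^ (m + 1) = 0 := by
      have e1 : (-A * (m : AlgebraicClosure (ZMod p))) ^ m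
          = (((m : AlgebraicClosure (ZMod p)) + 1) * α) ^ m := by
        rw [hk3']; ring_nf
      rw [e1, mul_pow]
      have e3 : A * (((m : AlgebraicClosure (ZMod p)) + 1) ^ m * α ^ m)
          = ((m : AlgebraicClosure (ZMod p)) + 1) ^ m * (A * α ^ m) := by ring
      rw [e3, hk2]
      ring
    apply hS
    apply hinj
    rw [map_zero]
    simp only [map_add, map_mul, map_pow, map_neg, map_one, map_natCast, ← hA, ← hB]
    exact hfinal
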